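/- Let Q be symmetric positive semidefinite, c ∈ ℝⁿ, and suppose the problem min { xᵀQx + cᵀx : x ≥ 0 } is unbounded below. Then there exists d ∈ ℝⁿ with d ≥ 0, Qd = 0, and cᵀd < 0. -/

import Mathlib

open Matrix Filter Topology Metric Bornology

private lemma dot_self_nonneg' {n : ℕ} (x : Fin n → ℝ) : 0 ≤ x ⬝ᵥ x :=
  Finset.sum_nonneg fun _ _ => mul_self_nonneg _

private lemma abs_le_sqrt_dot {n : ℕ} (x : Fin n → ℝ) (i : Fin n) :
    |x i| ≤ Real.sqrt (x ⬝ᵥ x) := by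
  rw [← Real.sqrt_sq_eq_abs]
  apply Real.sqrt_le_sqrt
  rw [sq]
  exact Finset.single_le_sum (f := fun j => x j * x j)
    (fun j _ => mul_self_nonneg _) (Finset.mem_univ i)

private lemma norm_le_sqrt_dot {n : ℕ} (x : Fin n → ℝ) : ‖x‖ ≤ Real.sqrt (x ⬝ᵥ x) := by
  rw [pi_norm_le_iff_of_nonneg (Real.sqrt_nonneg _)]
  intro i
  rw [Real.norm_eq_abs]
  exact abs_le_sqrt_dot x i

private lemma cont_quad {n : ℕ} (Q : Matrix (Fin n) (Fin n) ℝ) :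
    Continuous fun x : Fin n → ℝ => x ⬝ᵥ (Q *ᵥ x) := by
  simp only [dotProduct, Matrix.mulVec]
  fun_prop

private lemma cont_dotc {n : ℕ} (c : Fin n → ℝ) : Continuous fun x : Fin n → ℝ => c ⬝ᵥ x := by
  simp only [dotProduct]; fun_prop

private lemma cont_dotc' {n : ℕ} (c : Fin n → ℝ) : Continuous fun x : Fin n → ℝ => x ⬝ᵥ c := by
  simp only [dotProduct]; fun_prop

private lemma cont_dotself {n : ℕ} : Continuous fun x : Fin n → ℝ => x ⬝ᵥ x := by
  simp only [dotProduct]; fun_prop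

theorem stmt_2 {n : ℕ} (Q : Matrix (Fin n) (Fin n) ℝ) (hQ : Q.PosSemidef)
    (c : Fin n → ℝ)
    (hunb : ∀ M : ℝ, ∃ x : Fin n → ℝ, (∀ i, 0 ≤ x i) ∧ x ⬝ᵥ (Q *ᵥ x) + c ⬝ᵥ x < M) :
    ∃ d : Fin n → ℝ, (∀ i, 0 ≤ d i) ∧ Q *ᵥ d = 0 ∧ c ⬝ᵥ d < 0 := by
  by_contra hcon
  push_neg at hcon
  -- basic quadratic form facts
  have hq0 : ∀ x : Fin n → ℝ, 0 ≤ x ⬝ᵥ (Q *ᵥ x) := fun x => by simpa using hQ.dotProduct_mulVec_nonneg x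
  have hker : ∀ x : Fin n → ℝ, x ⬝ᵥ (Q *ᵥ x) = 0 → Q *ᵥ x = 0 := fun x hx =>
    (hQ.dotProduct_mulVec_zero_iff x).mp (by simpa using hx)
  have hsym : ∀ x y : Fin n → ℝ, x ⬝ᵥ (Q *ᵥ y) = y ⬝ᵥ (Q *ᵥ x) := by
    intro x y
    rw [Matrix.dotProduct_mulVec, ← Matrix.mulVec_transpose, show Qᵀ = Q from hQ.1]
    exact dotProduct_comm _ _
  have hqsub : ∀ x w : Fin n → ℝ, Q *ᵥ w = 0 →
      (x - w) ⬝ᵥ (Q *ᵥ (x - w)) = x ⬝ᵥ (Q *ᵥ x) := by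
    intro x w hw
    have h1 : x ⬝ᵥ (Q *ᵥ w) = 0 := by rw [hw, dotProduct_zero]
    have h2 : w ⬝ᵥ (Q *ᵥ x) = 0 := by rw [hsym, h1]
    have h3 : w ⬝ᵥ (Q *ᵥ w) = 0 := by rw [hw, dotProduct_zero]
    rw [Matrix.mulVec_sub, dotProduct_sub, sub_dotProduct,
      sub_dotProduct, h1, h2, h3]
    ring
  -- the sets of normalized near-minimizers
  set S : ℕ → Set (Fin n → ℝ) := fun k =>
    {z | (∀ i, 0 ≤ z i) ∧ c ⬝ᵥ z = -1 ∧ z ⬝ᵥ (Q *ᵥ z) ≤ 1 / (k + 1)} with hSdef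
  have hSclosed : ∀ k, IsClosed (S k) := by
    intro k
    have he : S k = {z : Fin n → ℝ | ∀ i, 0 ≤ z i} ∩
        ({z | c ⬝ᵥ z = -1} ∩ {z | z ⬝ᵥ (Q *ᵥ z) ≤ 1 / (k + 1)}) := by
      ext z; simp [hSdef, Set.mem_setOf_eq, and_assoc]
    rw [he]
    refine IsClosed.inter ?_ (IsClosed.inter ?_ ?_)
    · have h2 : {z : Fin n → ℝ | ∀ i, 0 ≤ z i} = ⋂ i, {z | 0 ≤ z i} := by ext; simp
      rw [h2]
      exact isClosed_iInter fun i => isClosed_le continuous_const (continuous_apply i)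
    · exact isClosed_eq (cont_dotc c) continuous_const
    · exact isClosed_le (cont_quad Q) continuous_const
  -- nonemptiness of each `S k`
  have hSne : ∀ k, (S k).Nonempty := by
    intro k
    obtain ⟨x, hxnn, hxlt⟩ := hunb (-(k + 1))
    set a : ℝ := c ⬝ᵥ x with hadef
    have hqx : 0 ≤ x ⬝ᵥ (Q *ᵥ x) := hq0 x
    have hk1 : (0:ℝ) < k + 1 := by positivity
    have ha : a < -(k + 1) := by linarith
    have hapos : 0 < -a := by linarith
    refine ⟨(-a)⁻¹ • x, ?_, ?_, ?_⟩
    · intro i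
      exact mul_nonneg (by positivity) (hxnn i)
    · rw [dotProduct_smul]
      show (-a)⁻¹ * a = -1
      rw [inv_mul_eq_iff_eq_mul₀ (by linarith)]; ring
    · rw [Matrix.mulVec_smul, smul_dotProduct, dotProduct_smul]
      have hqa : x ⬝ᵥ (Q *ᵥ x) ≤ -a := by linarith
      have hka : (k : ℝ) + 1 ≤ -a := by linarith
      rw [smul_eq_mul, smul_eq_mul, ← mul_assoc]
      have heq : (-a)⁻¹ * (-a)⁻¹ * (x ⬝ᵥ (Q *ᵥ x)) = (x ⬝ᵥ (Q *ᵥ x)) / ((-a) * (-a)) := by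
        rw [div_eq_mul_inv, mul_inv]; ring
      rw [heq, div_le_div_iff₀ (by positivity) hk1]
      nlinarith
  -- minimal-norm elements of each `S k`
  have hminex : ∀ k, ∃ z ∈ S k, ∀ y ∈ S k, z ⬝ᵥ z ≤ y ⬝ᵥ y := by
    intro k
    obtain ⟨z0, hz0⟩ := hSne k
    set K : Set (Fin n → ℝ) := S k ∩ {y | y ⬝ᵥ y ≤ z0 ⬝ᵥ z0} with hKdef
    have hKc : IsClosed K := (hSclosed k).inter (isClosed_le cont_dotself continuous_const)
    have hKsub : K ⊆ closedBall 0 (Real.sqrt (z0 ⬝ᵥ z0)) := by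
      intro y hy
      rw [mem_closedBall_zero_iff]
      calc ‖y‖ ≤ Real.sqrt (y ⬝ᵥ y) := norm_le_sqrt_dot y
        _ ≤ Real.sqrt (z0 ⬝ᵥ z0) := Real.sqrt_le_sqrt hy.2
    have hKcpt : IsCompact K :=
      IsCompact.of_isClosed_subset (isCompact_closedBall _ _) hKc hKsub
    obtain ⟨z, hzK, hzmin⟩ := hKcpt.exists_isMinOn ⟨z0, hz0, Set.mem_setOf_eq ▸ le_rfl⟩
      cont_dotself.continuousOn
    refine ⟨z, hzK.1, fun y hy => ?_⟩
    by_cases hyb : y ⬝ᵥ y ≤ z0 ⬝ᵥ z0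
    · exact hzmin ⟨hy, hyb⟩
    · exact le_trans (hzmin ⟨hz0, Set.mem_setOf_eq ▸ le_rfl⟩) (by linarith)
  choose z hzS hzmin using hminex
  have hznn : ∀ k i, 0 ≤ z k i := fun k => (hzS k).1
  have hzc : ∀ k, c ⬝ᵥ z k = -1 := fun k => (hzS k).2.1
  have hzq : ∀ k, z k ⬝ᵥ (Q *ᵥ z k) ≤ 1 / (k + 1) := fun k => (hzS k).2.2
  have honediv : ∀ (j k : ℕ), j ≤ k → (1:ℝ) / (k + 1) ≤ 1 / (j + 1) := by
    intro j k hjk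
    apply one_div_le_one_div_of_le (by positivity)
    have : (j:ℝ) ≤ k := Nat.cast_le.mpr hjk
    linarith
  by_cases hbd : ∃ B, ∀ k, z k ⬝ᵥ z k ≤ B
  · -- bounded case: extract a convergent subsequence, limit contradicts `hcon`
    obtain ⟨B, hB⟩ := hbd
    have hmem : ∀ k, z k ∈ closedBall (0 : Fin n → ℝ) (Real.sqrt B) := by
      intro k
      rw [mem_closedBall_zero_iff]
      exact le_trans (norm_le_sqrt_dot _) (Real.sqrt_le_sqrt (hB k))
    obtain ⟨zs, -, φ, hφmono, hφtend⟩ :=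
      tendsto_subseq_of_bounded isBounded_closedBall hmem
    have hnn : ∀ i, 0 ≤ zs i := by
      intro i
      have ht : Tendsto (fun j => z (φ j) i) atTop (𝓝 (zs i)) :=
        ((continuous_apply i).tendsto zs).comp hφtend
      exact ge_of_tendsto ht (Eventually.of_forall fun j => hznn (φ j) i)
    have hcz : c ⬝ᵥ zs = -1 := by
      have ht : Tendsto (fun j => c ⬝ᵥ z (φ j)) atTop (𝓝 (c ⬝ᵥ zs)) :=
        ((cont_dotc c).tendsto zs).comp hφtend
      have he : (fun j => c ⬝ᵥ z (φ j)) = fun _ => (-1 : ℝ) :=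
        funext fun j => hzc (φ j)
      rw [he] at ht
      exact tendsto_nhds_unique ht tendsto_const_nhds
    have hqz : zs ⬝ᵥ (Q *ᵥ zs) = 0 := by
      have ht : Tendsto (fun j => z (φ j) ⬝ᵥ (Q *ᵥ z (φ j))) atTop (𝓝 (zs ⬝ᵥ (Q *ᵥ zs))) :=
        ((cont_quad Q).tendsto zs).comp hφtend
      have hle : zs ⬝ᵥ (Q *ᵥ zs) ≤ 0 := by
        refine le_of_tendsto_of_tendsto ht tendsto_one_div_add_atTop_nhds_zero_nat
          (Eventually.of_forall fun j => ?_)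
        exact le_trans (hzq (φ j)) (honediv j (φ j) (hφmono.le_apply))
      exact le_antisymm hle (hq0 zs)
    have := hcon zs hnn (hker zs hqz)
    rw [hcz] at this
    linarith
  · -- unbounded case: contradict minimality of the chosen elements
    push_neg at hbd
    choose kk hkk using fun j : ℕ => hbd ((j : ℝ) + 4)
    set s : ℕ → ℝ := fun j => Real.sqrt (z (kk j) ⬝ᵥ z (kk j)) with hsdef
    have hsq : ∀ j, s j * s j = z (kk j) ⬝ᵥ z (kk j) := fun j =>
      Real.mul_self_sqrt (dot_self_nonneg' _)
    have hs2 : ∀ j, 2 ≤ s j := by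
      intro j
      have h4 : (4:ℝ) ≤ z (kk j) ⬝ᵥ z (kk j) := by
        have := hkk j
        have hj : (0:ℝ) ≤ (j:ℝ) := Nat.cast_nonneg j
        linarith
      have : Real.sqrt 4 ≤ s j := Real.sqrt_le_sqrt h4
      rwa [show (4:ℝ) = 2^2 by norm_num, Real.sqrt_sq (by norm_num : (0:ℝ) ≤ 2)] at this
    have hspos : ∀ j, 0 < s j := fun j => lt_of_lt_of_le two_pos (hs2 j)
    set w : ℕ → (Fin n → ℝ) := fun j => (s j)⁻¹ • z (kk j) with hwdef
    have hwz : ∀ j, z (kk j) = s j • w j := by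
      intro j
      rw [hwdef]
      simp [smul_smul, mul_inv_cancel₀ (hspos j).ne']
    have hw1 : ∀ j, w j ⬝ᵥ w j = 1 := by
      intro j
      rw [hwdef]
      simp only [smul_dotProduct, dotProduct_smul, smul_eq_mul]
      rw [← mul_assoc, ← mul_inv, hsq j]
      exact inv_mul_cancel₀ (by rw [← hsq j]; exact (mul_pos (hspos j) (hspos j)).ne')
    have hwnn : ∀ j i, 0 ≤ w j i := by
      intro j i
      have he : w j i = (s j)⁻¹ * z (kk j) i := rfl
      rw [he]
      exact mul_nonneg (inv_nonneg.mpr (hspos j).le) (hznn (kk j) i)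
    have hwmem : ∀ j, w j ∈ closedBall (0 : Fin n → ℝ) 1 := by
      intro j
      rw [mem_closedBall_zero_iff]
      have h := norm_le_sqrt_dot (w j)
      rwa [hw1 j, Real.sqrt_one] at h
    obtain ⟨wl, -, φ, hφmono, hφtend⟩ :=
      tendsto_subseq_of_bounded isBounded_closedBall hwmem
    have hwlnn : ∀ i, 0 ≤ wl i := by
      intro i
      have ht : Tendsto (fun m => w (φ m) i) atTop (𝓝 (wl i)) :=
        ((continuous_apply i).tendsto wl).comp hφtend
      exact ge_of_tendsto ht (Eventually.of_forall fun m => hwnn (φ m) i)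
    have hqw : ∀ j, w j ⬝ᵥ (Q *ᵥ w j) ≤ 1 / ((j:ℝ) + 1) := by
      intro j
      have h1 : w j ⬝ᵥ (Q *ᵥ w j)
          = (s j)⁻¹ * ((s j)⁻¹ * (z (kk j) ⬝ᵥ (Q *ᵥ z (kk j)))) := by
        rw [hwdef]
        simp only [Matrix.mulVec_smul, smul_dotProduct, dotProduct_smul,
          smul_eq_mul]
      have h2 : z (kk j) ⬝ᵥ (Q *ᵥ z (kk j)) ≤ 1 := by
        refine le_trans (hzq (kk j)) ?_
        rw [div_le_one (by positivity)]
        have : (0:ℝ) ≤ (kk j : ℝ) := Nat.cast_nonneg _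
        linarith
      have h3 : (s j)⁻¹ * (s j)⁻¹ ≤ 1 / ((j:ℝ) + 1) := by
        rw [← mul_inv, hsq j, inv_eq_one_div]
        apply one_div_le_one_div_of_le (by positivity)
        have := hkk j
        linarith
      have h4 : (0:ℝ) ≤ (s j)⁻¹ * (s j)⁻¹ := by positivity
      calc w j ⬝ᵥ (Q *ᵥ w j)
          = (s j)⁻¹ * (s j)⁻¹ * (z (kk j) ⬝ᵥ (Q *ᵥ z (kk j))) := by rw [h1]; ring
        _ ≤ (s j)⁻¹ * (s j)⁻¹ * 1 := by
            exact mul_le_mul_of_nonneg_left h2 h4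
        _ ≤ 1 / ((j:ℝ) + 1) := by rw [mul_one]; exact h3
    have hqwl : wl ⬝ᵥ (Q *ᵥ wl) = 0 := by
      have ht : Tendsto (fun m => w (φ m) ⬝ᵥ (Q *ᵥ w (φ m))) atTop
          (𝓝 (wl ⬝ᵥ (Q *ᵥ wl))) := ((cont_quad Q).tendsto wl).comp hφtend
      have hle : wl ⬝ᵥ (Q *ᵥ wl) ≤ 0 := by
        refine le_of_tendsto_of_tendsto ht tendsto_one_div_add_atTop_nhds_zero_nat
          (Eventually.of_forall fun m => ?_)
        exact le_trans (hqw (φ m)) (honediv m (φ m) (hφmono.le_apply))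
      exact le_antisymm hle (hq0 wl)
    have hQwl : Q *ᵥ wl = 0 := hker wl hqwl
    have hcwl : c ⬝ᵥ wl = 0 := by
      have hge : 0 ≤ c ⬝ᵥ wl := hcon wl hwlnn hQwl
      have hle : c ⬝ᵥ wl ≤ 0 := by
        have ht : Tendsto (fun m => c ⬝ᵥ w (φ m)) atTop (𝓝 (c ⬝ᵥ wl)) :=
          ((cont_dotc c).tendsto wl).comp hφtend
        refine le_of_tendsto ht (Eventually.of_forall fun m => ?_)
        rw [hwdef]
        simp only [dotProduct_smul, smul_eq_mul, hzc]
        have := hspos (φ m)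
        rw [mul_neg_one]
        simp [inv_nonneg.mpr this.le]
      exact le_antisymm hle hge
    have hNwl : wl ⬝ᵥ wl = 1 := by
      have ht : Tendsto (fun m => w (φ m) ⬝ᵥ w (φ m)) atTop (𝓝 (wl ⬝ᵥ wl)) :=
        (cont_dotself.tendsto wl).comp hφtend
      have he : (fun m => w (φ m) ⬝ᵥ w (φ m)) = fun _ => (1:ℝ) :=
        funext fun m => hw1 (φ m)
      rw [he] at ht
      exact tendsto_nhds_unique ht tendsto_const_nhds
    -- eventual closeness conditions
    have hE1 : ∀ᶠ m in atTop, ∀ i, wl i / 2 ≤ w (φ m) i := by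
      rw [eventually_all]
      intro i
      rcases eq_or_lt_of_le (hwlnn i) with h | h
      · exact Eventually.of_forall fun m => by rw [← h]; simpa using hwnn (φ m) i
      · have ht : Tendsto (fun m => w (φ m) i) atTop (𝓝 (wl i)) :=
          ((continuous_apply i).tendsto wl).comp hφtend
        exact ht.eventually_const_le (by linarith)
    have hE2 : ∀ᶠ m in atTop, 1/2 ≤ w (φ m) ⬝ᵥ wl := by
      have ht : Tendsto (fun m => w (φ m) ⬝ᵥ wl) atTop (𝓝 (wl ⬝ᵥ wl)) :=
        ((cont_dotc' wl).tendsto wl).comp hφtend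
      rw [hNwl] at ht
      exact ht.eventually_const_le (by norm_num)
    obtain ⟨m, hm1, hm2⟩ := (hE1.and hE2).exists
    -- the improved point
    set K := kk (φ m) with hKdef2
    set Z := z K with hZdef
    set σ := s (φ m) with hσdef
    have hZw : Z = σ • w (φ m) := hwz (φ m)
    have hσ2 : 2 ≤ σ := hs2 (φ m)
    have hz'S : Z - wl ∈ S K := by
      refine ⟨?_, ?_, ?_⟩
      · intro i
        have h1 : wl i / 2 ≤ w (φ m) i := hm1 i
        have h2 : Z i = σ * w (φ m) i := by rw [hZw]; rfl
        have h3 : 0 ≤ wl i := hwlnn i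
        simp only [Pi.sub_apply, sub_nonneg]
        nlinarith [hwnn (φ m) i]
      · rw [dotProduct_sub, hzc K, hcwl]
        ring
      · rw [hqsub Z wl hQwl]
        exact hzq K
    have hZwl : 1 ≤ Z ⬝ᵥ wl := by
      have h1 : Z ⬝ᵥ wl = σ * (w (φ m) ⬝ᵥ wl) := by
        rw [hZw, smul_dotProduct, smul_eq_mul]
      rw [h1]
      nlinarith
    have hlt : (Z - wl) ⬝ᵥ (Z - wl) < Z ⬝ᵥ Z := by
      have hexp : (Z - wl) ⬝ᵥ (Z - wl)
          = Z ⬝ᵥ Z - 2 * (Z ⬝ᵥ wl) + wl ⬝ᵥ wl := by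
        simp only [sub_dotProduct, dotProduct_sub]
        rw [dotProduct_comm wl Z]
        ring
      rw [hexp, hNwl]
      linarith
    exact absurd (hzmin K (Z - wl) hz'S) (not_le.mpr hlt)
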